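/- Assume f \in C^1([0,\infty)). Let u be a positive solution of the one-dimensional problem (1), let w be a solution of the linearized problem (4), and define T(x) = x\,[\,(p-1)\varphi_p(u'(x))\,w'(x) + \lambda f(u(x))\,w(x)\,] - (p-1)\varphi_p(u'(x))\,w(x). Then T'(x) = p\,\lambda\, f(u(x))\,w(x) for all x \in (-1,1). -/

import Mathlib

open Set

/-- `φ_p(t) = t |t|^{p-2}` (real exponent), with `φ_p(0)=0`. -/
noncomputable def phi (p t : ℝ) : ℝ := t * |t| ^ (p - 2)

/-- `φ_p'(t) = (p-1) |t|^{p-2}`. -/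
noncomputable def phi' (p t : ℝ) : ℝ := (p - 1) * |t| ^ (p - 2)

/-- The derivative of a function on `[-1,1]` (one-sided at the endpoints). -/
noncomputable def du (u : ℝ → ℝ) : ℝ → ℝ := derivWithin u (Set.Icc (-1) 1)

/-- A positive (classical) solution of the one-dimensional problem (1):
`(φ_p(u'))' + λ f(u) = 0` on `(-1,1)`, `u(-1) = u(1) = 0`,
with `u ∈ C^1[-1,1]`, `φ_p ∘ u' ∈ C^1((-1,1))`, and `u > 0` on `(-1,1)`. -/
structure Sol1D (p lam : ℝ) (f : ℝ → ℝ) (u : ℝ → ℝ) : Prop where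
  reg : ContDiffOn ℝ 1 u (Set.Icc (-1) 1)
  reg' : ContDiffOn ℝ 1 (fun x => phi p (du u x)) (Set.Ioo (-1) 1)
  pos : ∀ x ∈ Set.Ioo (-1:ℝ) 1, 0 < u x
  bcm : u (-1) = 0
  bc1 : u 1 = 0
  ode : ∀ x ∈ Set.Ioo (-1:ℝ) 1,
    deriv (fun y => phi p (du u y)) x + lam * f (u x) = 0

/-- A solution of the linearized problem (4) at `u`:
`(φ_p'(u') w')' + λ f'(u) w = 0` on `(-1,1)`, `w(-1) = w(1) = 0`. -/
structure Lin1D (p lam : ℝ) (f : ℝ → ℝ) (u w : ℝ → ℝ) : Prop where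
  reg : ContDiffOn ℝ 1 w (Set.Icc (-1) 1)
  reg' : ContDiffOn ℝ 1 (fun x => phi' p (du u x) * du w x) (Set.Ioo (-1) 1)
  ode : ∀ x ∈ Set.Ioo (-1:ℝ) 1,
    deriv (fun y => phi' p (du u y) * du w y) x + lam * deriv f (u x) * w x = 0
  bcm : w (-1) = 0
  bc1 : w 1 = 0

open Filter

lemma L1 {G W : ℝ → ℝ} {x₀ d : ℝ} (hG : HasDerivAt G d x₀) (h0 : G x₀ = 0)
    (hW : ContinuousAt W x₀) :
    HasDerivAt (fun y => G y * W y) (d * W x₀) x₀ := by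
  rw [hasDerivAt_iff_tendsto_slope] at hG ⊢
  have hWt : Tendsto W (nhdsWithin x₀ {x₀}ᶜ) (nhds (W x₀)) :=
    hW.continuousWithinAt.tendsto
  have := hG.mul hWt
  refine this.congr (fun y => ?_)
  simp [slope_def_field, h0, div_mul_eq_mul_div]

lemma L2a {β s₀ : ℝ} (hs : 0 < s₀) :
    HasDerivAt (fun s => s * |s| ^ β) ((β + 1) * |s₀| ^ β) s₀ := by
  have h : HasDerivAt (fun s : ℝ => s ^ (β + 1)) ((β + 1) * s₀ ^ (β + 1 - 1)) s₀ :=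
    Real.hasDerivAt_rpow_const (Or.inl hs.ne')
  have he : (fun s : ℝ => s ^ (β + 1)) =ᶠ[nhds s₀] fun s => s * |s| ^ β := by
    filter_upwards [eventually_gt_nhds hs] with s hs'
    rw [abs_of_pos hs', add_comm, Real.rpow_add hs', Real.rpow_one]
  have := h.congr_of_eventuallyEq he.symm
  simpa [abs_of_pos hs, add_sub_cancel_right] using this

lemma L2a' {β s₀ : ℝ} (hs : s₀ ≠ 0) :
    HasDerivAt (fun s => s * |s| ^ β) ((β + 1) * |s₀| ^ β) s₀ := by
  rcases hs.lt_or_gt with h | h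
  · have h1 : HasDerivAt (fun s : ℝ => -s) (-1) s₀ := by
      simpa using hasDerivAt_neg s₀
    have h2 := (L2a (β := β) (neg_pos.2 h)).comp s₀ h1
    have h3 := h2.neg
    have he : HasDerivAt (fun s : ℝ => s * |s| ^ β) (-((β + 1) * |(-s₀)| ^ β * -1)) s₀ := by
      refine h3.congr_of_eventuallyEq (Eventually.of_forall fun s => ?_)
      simp [Function.comp]
    simpa [abs_neg] using he
  · exact L2a h

lemma abs_phi {p : ℝ} (hp : 1 < p) (t : ℝ) : |phi p t| = |t| ^ (p - 1) := by
  rcases eq_or_ne t 0 with rfl | ht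
  · simp [phi, Real.zero_rpow (by linarith : p - 1 ≠ 0)]
  · have h1 : (0:ℝ) < |t| := abs_pos.2 ht
    rw [phi, abs_mul, abs_of_nonneg (Real.rpow_nonneg (abs_nonneg t) _),
      show p - 1 = 1 + (p - 2) by ring, Real.rpow_add h1, Real.rpow_one]

lemma psi_phi {p : ℝ} (hp : 1 < p) (t : ℝ) :
    phi p t * |phi p t| ^ ((2 - p) / (p - 1)) = t := by
  rcases eq_or_ne t 0 with rfl | ht
  · simp [phi]
  · have h1 : (0:ℝ) < |t| := abs_pos.2 ht
    have hp1 : p - 1 ≠ 0 := by linarith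
    rw [abs_phi hp, ← Real.rpow_mul (abs_nonneg t),
      mul_div_assoc', mul_div_cancel_left₀ _ hp1, phi, mul_assoc,
      ← Real.rpow_add h1]
    norm_num

lemma L3 {p : ℝ} (hp : 1 < p) (hp2 : p ≠ 2) {U W : ℝ → ℝ} {x₀ c : ℝ}
    (hU0 : U x₀ = 0)
    (hG : HasDerivAt (fun y => phi p (U y)) c x₀) (hc : c ≠ 0)
    (hg : DifferentiableAt ℝ (fun y => phi' p (U y) * W y) x₀)
    (hW : ContinuousAt W x₀) : W x₀ = 0 := by
  set G : ℝ → ℝ := fun y => phi p (U y) with hGdef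
  set g : ℝ → ℝ := fun y => phi' p (U y) * W y with hgdef
  have hp1 : (0:ℝ) < p - 1 := by linarith
  have hG0 : G x₀ = 0 := by simp [hGdef, hU0, phi]
  have hg0 : g x₀ = 0 := by
    simp [hgdef, hU0, phi', Real.zero_rpow (sub_ne_zero.2 hp2)]
  set γ : ℝ := 1 / (p - 1) with hγdef
  have hγpos : 0 < γ := by positivity
  set c₁ : ℝ := |c| / 2 with hc₁def
  set c₂ : ℝ := 2 * |c| with hc₂def
  have hc₁pos : 0 < c₁ := by simp [hc₁def]; positivity
  have hc₂pos : 0 < c₂ := by simp [hc₂def]; positivity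
  set C : ℝ := |deriv g x₀| + 1 with hCdef
  have hCpos : 0 < C := by positivity
  set l := nhdsWithin x₀ {x₀}ᶜ with hldef
  have hGt : Tendsto (fun y => |slope G x₀ y|) l (nhds |c|) :=
    (hasDerivAt_iff_tendsto_slope.1 hG).abs
  have hgt : Tendsto (fun y => |slope g x₀ y|) l (nhds |deriv g x₀|) :=
    (hasDerivAt_iff_tendsto_slope.1 hg.hasDerivAt).abs
  have E1 : ∀ᶠ y in l, c₁ < |slope G x₀ y| :=
    hGt.eventually (eventually_gt_nhds (by simp [hc₁def]; positivity))
  have E2 : ∀ᶠ y in l, |slope G x₀ y| < c₂ :=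
    hGt.eventually (eventually_lt_nhds (by
      have : 0 < |c| := abs_pos.2 hc
      simp only [hc₂def]; linarith))
  have E3 : ∀ᶠ y in l, |slope g x₀ y| < C :=
    hgt.eventually (eventually_lt_nhds (lt_add_one _))
  have E0 : ∀ᶠ y in l, y ≠ x₀ := by
    filter_upwards [self_mem_nhdsWithin] with y hy
    exact hy
  set K : ℝ := C * c₂ ^ γ / ((p - 1) * c₁) with hKdef
  have key : ∀ᶠ y in l, ‖W y‖ ≤ K * |y - x₀| ^ γ := by
    filter_upwards [E0, E1, E2, E3] with y hy0 hy1 hy2 hy3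
    set r : ℝ := |y - x₀| with hrdef
    have hr : 0 < r := abs_pos.2 (sub_ne_zero.2 hy0)
    have hsG : |slope G x₀ y| = |G y| / r := by
      rw [slope_def_field, hG0, sub_zero, abs_div, hrdef, abs_sub_comm]
    have hsg : |slope g x₀ y| = |g y| / r := by
      rw [slope_def_field, hg0, sub_zero, abs_div, hrdef, abs_sub_comm]
    rw [hsG] at hy1 hy2
    rw [hsg] at hy3
    have hGy1 : c₁ * r < |G y| := by
      rw [lt_div_iff₀ hr] at hy1; linarith
    have hGy2 : |G y| < c₂ * r := by
      rw [div_lt_iff₀ hr] at hy2; linarith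
    have hgygy : |g y| < C * r := by
      rw [div_lt_iff₀ hr] at hy3; linarith
    set a : ℝ := |U y| with hadef
    have haG : a ^ (p - 1) = |G y| := (abs_phi hp (U y)).symm
    have hUy : U y ≠ 0 := by
      intro h
      rw [hGdef] at hGy1
      simp only [h] at hGy1
      simp [phi] at hGy1
      nlinarith
    have hapos : 0 < a := abs_pos.2 hUy
    have hgy : |g y| = (p - 1) * a ^ (p - 2) * |W y| := by
      rw [hgdef]
      simp only [abs_mul, phi', abs_mul]
      rw [abs_of_pos hp1, abs_of_nonneg (Real.rpow_nonneg (abs_nonneg _) _)]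
    have heq : a * |g y| = (p - 1) * |G y| * |W y| := by
      rw [hgy, ← haG, show p - 1 = (p - 2) + 1 by ring, Real.rpow_add hapos,
        Real.rpow_one]
      ring
    have ha_le : a ≤ c₂ ^ γ * r ^ γ := by
      have h1 : a ^ (p - 1) ≤ c₂ * r := le_of_lt (haG ▸ hGy2)
      have h2 : (a ^ (p - 1)) ^ γ ≤ (c₂ * r) ^ γ :=
        Real.rpow_le_rpow (Real.rpow_nonneg hapos.le _) h1 hγpos.le
      rwa [← Real.rpow_mul hapos.le, mul_one_div, div_self (by linarith : p - 1 ≠ 0),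
        Real.rpow_one, Real.mul_rpow hc₂pos.le hr.le] at h2
    have h1 : (p - 1) * |G y| * |W y| ≤ c₂ ^ γ * r ^ γ * (C * r) := by
      calc (p - 1) * |G y| * |W y| = a * |g y| := heq.symm
        _ ≤ (c₂ ^ γ * r ^ γ) * (C * r) := by
            apply mul_le_mul ha_le hgygy.le (abs_nonneg _)
            positivity
    have h2 : ((p - 1) * c₁ * r) * |W y| ≤ ((p - 1) * |G y|) * |W y| := by
      apply mul_le_mul_of_nonneg_right _ (abs_nonneg _)
      have := mul_le_mul_of_nonneg_left hGy1.le hp1.le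
      linarith [this]
    have hrγ : 0 < r ^ γ := Real.rpow_pos_of_pos hr _
    rw [Real.norm_eq_abs, hKdef, div_mul_eq_mul_div, le_div_iff₀ (by positivity)]
    have h4 : (|W y| * ((p - 1) * c₁)) * r ≤ (C * c₂ ^ γ * r ^ γ) * r := by
      calc (|W y| * ((p - 1) * c₁)) * r = ((p - 1) * c₁ * r) * |W y| := by ring
        _ ≤ ((p - 1) * |G y|) * |W y| := h2
        _ = (p - 1) * |G y| * |W y| := by ring
        _ ≤ c₂ ^ γ * r ^ γ * (C * r) := h1
        _ = (C * c₂ ^ γ * r ^ γ) * r := by ring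
    exact le_of_mul_le_mul_right h4 hr
  have htr : Tendsto (fun y => K * |y - x₀| ^ γ) l (nhds 0) := by
    have h0 : Tendsto (fun y : ℝ => |y - x₀|) l (nhds 0) := by
      have hcont : Continuous (fun y : ℝ => |y - x₀|) :=
        (continuous_id.sub continuous_const).abs
      have := hcont.tendsto x₀
      simp only [sub_self, abs_zero] at this
      exact this.mono_left nhdsWithin_le_nhds
    have h1 := h0.rpow_const (Or.inr hγpos.le)
    rw [Real.zero_rpow hγpos.ne'] at h1
    simpa using h1.const_mul K
  have hW0 : Tendsto W l (nhds 0) := squeeze_zero_norm' key htr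
  have hWx : Tendsto W l (nhds (W x₀)) := hW.continuousWithinAt.tendsto
  exact tendsto_nhds_unique hWx hW0

/-- Lemma 3.5: the identity `T'(x) = p λ f(u(x)) w(x)` for
`T(x) = x[(p-1)φ_p(u')w' + λ f(u) w] - (p-1)φ_p(u')w`. -/
theorem stmt15 (p : ℝ) (hp : 1 < p) (lam : ℝ) (hlam : 0 < lam)
    (f : ℝ → ℝ) (hf : ContDiffOn ℝ 1 f (Set.Ici 0))
    (u : ℝ → ℝ) (hu : Sol1D p lam f u)
    (w : ℝ → ℝ) (hw : Lin1D p lam f u w) :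
    ∀ x ∈ Set.Ioo (-1:ℝ) 1,
      deriv (fun y => y * ((p - 1) * phi p (du u y) * du w y + lam * f (u y) * w y)
          - (p - 1) * phi p (du u y) * w y) x
        = p * lam * f (u x) * w x := by
  intro x₀ hx
  have hp1 : (0:ℝ) < p - 1 := by linarith
  have hmem : Set.Icc (-1:ℝ) 1 ∈ nhds x₀ := Icc_mem_nhds hx.1 hx.2
  have hmemI : Set.Ioo (-1:ℝ) 1 ∈ nhds x₀ := isOpen_Ioo.mem_nhds hx
  have hxIcc : x₀ ∈ Set.Icc (-1:ℝ) 1 := Ioo_subset_Icc_self hx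
  -- u and w differentiable at x₀
  have hud : DifferentiableAt ℝ u x₀ :=
    ((hu.reg.differentiableOn one_ne_zero) x₀ hxIcc).differentiableAt hmem
  have hu1 : HasDerivAt u (du u x₀) x₀ := by
    have h : du u x₀ = deriv u x₀ := derivWithin_of_mem_nhds hmem
    rw [h]; exact hud.hasDerivAt
  have hwd : DifferentiableAt ℝ w x₀ :=
    ((hw.reg.differentiableOn one_ne_zero) x₀ hxIcc).differentiableAt hmem
  have hw1 : HasDerivAt w (du w x₀) x₀ := by
    have h : du w x₀ = deriv w x₀ := derivWithin_of_mem_nhds hmem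
    rw [h]; exact hwd.hasDerivAt
  -- G = phi p (du u ·)
  have hGd : DifferentiableAt ℝ (fun y => phi p (du u y)) x₀ :=
    ((hu.reg'.differentiableOn one_ne_zero) x₀ hx).differentiableAt hmemI
  have hG : HasDerivAt (fun y => phi p (du u y)) (-(lam * f (u x₀))) x₀ := by
    have h := hGd.hasDerivAt
    have h2 : deriv (fun y => phi p (du u y)) x₀ = -(lam * f (u x₀)) := by
      have := hu.ode x₀ hx; linarith
    rwa [h2] at h
  -- g = phi' p (du u ·) * du w ·
  have hgd : DifferentiableAt ℝ (fun y => phi' p (du u y) * du w y) x₀ :=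
    ((hw.reg'.differentiableOn one_ne_zero) x₀ hx).differentiableAt hmemI
  have hg : HasDerivAt (fun y => phi' p (du u y) * du w y)
      (-(lam * deriv f (u x₀) * w x₀)) x₀ := by
    have h := hgd.hasDerivAt
    have h2 : deriv (fun y => phi' p (du u y) * du w y) x₀
        = -(lam * deriv f (u x₀) * w x₀) := by
      have := hw.ode x₀ hx; linarith
    rwa [h2] at h
  -- f ∘ u
  have hupos : 0 < u x₀ := hu.pos x₀ hx
  have hfd : DifferentiableAt ℝ f (u x₀) :=
    ((hf.differentiableOn one_ne_zero) (u x₀) hupos.le).differentiableAt (Ici_mem_nhds hupos)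
  have hfu : HasDerivAt (fun y => f (u y)) (deriv f (u x₀) * du u x₀) x₀ :=
    (hfd.hasDerivAt).comp x₀ hu1
  -- continuity of du w
  have hWc : ContinuousAt (du w) x₀ :=
    ((hw.reg.continuousOn_derivWithin (uniqueDiffOn_Icc (by norm_num)) le_rfl)).continuousAt hmem
  -- derivative of the second summand
  have hfw : HasDerivAt (fun y => lam * f (u y) * w y)
      (lam * (deriv f (u x₀) * du u x₀) * w x₀ + lam * f (u x₀) * du w x₀) x₀ :=
    (hfu.const_mul lam).mul hw1
  -- B has derivative 0
  have hB : HasDerivAt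
      (fun y => (p - 1) * phi p (du u y) * du w y + lam * f (u y) * w y) 0 x₀ := by
    rcases eq_or_ne (du u x₀) 0 with h0 | h0
    · -- u'(x₀) = 0
      have hG0 : phi p (du u x₀) = 0 := by rw [h0]; simp [phi]
      have hA0 : HasDerivAt (fun y => phi p (du u y) * du w y)
          (-(lam * f (u x₀)) * du w x₀) x₀ := L1 hG hG0 hWc
      have h := (hA0.const_mul (p - 1)).add hfw
      have hkey : (2 - p) * (lam * f (u x₀) * du w x₀) = 0 := by
        rcases eq_or_ne p 2 with hp2 | hp2
        · rw [hp2]; ring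
        · rcases eq_or_ne (f (u x₀)) 0 with hf0 | hf0
          · rw [hf0]; ring
          · have hc : -(lam * f (u x₀)) ≠ 0 := by
              simp only [neg_ne_zero]
              exact mul_ne_zero hlam.ne' hf0
            have hW0 : du w x₀ = 0 := L3 hp hp2 h0 hG hc hgd hWc
            rw [hW0]; ring
      have hd : (p - 1) * (-(lam * f (u x₀)) * du w x₀)
          + (lam * (deriv f (u x₀) * du u x₀) * w x₀ + lam * f (u x₀) * du w x₀) = 0 := by
        rw [h0]; linear_combination hkey
      rw [hd] at h
      exact h.congr_of_eventuallyEq (Eventually.of_forall fun y => by simp only [Pi.add_apply]; ring)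
    · -- u'(x₀) ≠ 0
      set β : ℝ := (2 - p) / (p - 1) with hβdef
      have hUabs : (0:ℝ) < |du u x₀| := abs_pos.2 h0
      have hG0ne : phi p (du u x₀) ≠ 0 := by
        intro h
        have := abs_phi hp (du u x₀)
        rw [h, abs_zero] at this
        exact absurd this.symm (ne_of_gt (Real.rpow_pos_of_pos hUabs _))
      have hψ := L2a' (β := β) hG0ne
      have hU' : HasDerivAt (du u)
          ((β + 1) * |phi p (du u x₀)| ^ β * -(lam * f (u x₀))) x₀ := by
        have h2 := hψ.comp x₀ hG
        have he : ((fun s => s * |s| ^ β) ∘ (fun y => phi p (du u y))) = du u :=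
          funext fun y => psi_phi hp (du u y)
        rwa [he] at h2
      have hA : HasDerivAt (fun y => du u y * (phi' p (du u y) * du w y))
          ((β + 1) * |phi p (du u x₀)| ^ β * -(lam * f (u x₀))
              * (phi' p (du u x₀) * du w x₀)
            + du u x₀ * -(lam * deriv f (u x₀) * w x₀)) x₀ := hU'.mul hg
      have h := hA.add hfw
      have e1 : (β + 1) * (p - 1) = 1 := by
        rw [hβdef]; field_simp; norm_num
      have e2 : |phi p (du u x₀)| ^ β * |du u x₀| ^ (p - 2) = 1 := by
        rw [abs_phi hp, ← Real.rpow_mul (abs_nonneg _), ← Real.rpow_add hUabs]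
        have h3 : (p - 1) * β + (p - 2) = 0 := by
          rw [hβdef]; field_simp; ring
        rw [h3, Real.rpow_zero]
      have hkey : (β + 1) * |phi p (du u x₀)| ^ β * -(lam * f (u x₀))
          * phi' p (du u x₀) = -(lam * f (u x₀)) := by
        calc (β + 1) * |phi p (du u x₀)| ^ β * -(lam * f (u x₀)) * phi' p (du u x₀)
            = -(lam * f (u x₀)) * ((β + 1) * (p - 1))
              * (|phi p (du u x₀)| ^ β * |du u x₀| ^ (p - 2)) := by
              rw [phi']; ring
          _ = -(lam * f (u x₀)) := by rw [e1, e2]; ring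
      have hd : (β + 1) * |phi p (du u x₀)| ^ β * -(lam * f (u x₀))
              * (phi' p (du u x₀) * du w x₀)
            + du u x₀ * -(lam * deriv f (u x₀) * w x₀)
          + (lam * (deriv f (u x₀) * du u x₀) * w x₀ + lam * f (u x₀) * du w x₀) = 0 := by
        linear_combination (du w x₀) * hkey
      rw [hd] at h
      exact h.congr_of_eventuallyEq (Eventually.of_forall fun y => by
        simp only [phi, phi', Pi.add_apply]; ring)
  -- assemble
  have hxB : HasDerivAt
      (fun y => y * ((p - 1) * phi p (du u y) * du w y + lam * f (u y) * w y))
      (1 * ((p - 1) * phi p (du u x₀) * du w x₀ + lam * f (u x₀) * w x₀) + x₀ * 0) x₀ :=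
    (hasDerivAt_id x₀).mul hB
  have hGw : HasDerivAt (fun y => phi p (du u y) * w y)
      (-(lam * f (u x₀)) * w x₀ + phi p (du u x₀) * du w x₀) x₀ := hG.mul hw1
  have h2 := hGw.const_mul (p - 1)
  have hT := hxB.sub h2
  have hfun : (fun y => y * ((p - 1) * phi p (du u y) * du w y + lam * f (u y) * w y)
        - (p - 1) * phi p (du u y) * w y)
      = (fun y => y * ((p - 1) * phi p (du u y) * du w y + lam * f (u y) * w y)
        - (p - 1) * (phi p (du u y) * w y)) := funext fun y => by ring
  rw [hfun]
  exact hT.deriv.trans (by ring)
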